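/- For every s ∈ [0,1] the generating function Π(s) = ∑_{n=0}^∞ π_n s^n satisfies Π(s)·U_β(s) = π_0·[U_β(s) + s·(H(u(β)) − H(s))] + ∑_{k=1}^{c−1} π_k (c−k) b_0·[s^k (1−s) − s·u(β)^{k−1}(1 − u(β))], where U_β(s) = B_c(s) − β s and u(β) is the unique root of U_β in [0,1]. Equivalently, Π(s)·(B_c(s) − β s) = π_0·[B_c(s) + s·(h − H(s))] − β s + ∑_{k=1}^{c−1} π_k s^k (c−k) b_0 (1−s). -/

import Mathlib

open Set Filter Topology

lemma sum_Icc_one_eq (N : ℕ) (f : ℕ → ℝ) :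
    ∑ k ∈ Finset.Icc 1 N, f k = ∑ k ∈ Finset.range N, f (k + 1) := by
  induction N with
  | zero => simp
  | succ n ih =>
    rw [Finset.sum_Icc_succ_top (by omega : 1 ≤ n + 1), ih, Finset.sum_range_succ]

/-- The generating function `B_i(s) = ∑_{j≥0} b_j s^j + (i-1) b_0 (1-s)`. -/
noncomputable def Bi (b : ℕ → ℝ) (i : ℕ) (s : ℝ) : ℝ :=
  (∑' j : ℕ, b j * s ^ j) + ((i : ℝ) - 1) * b 0 * (1 - s)

/-- The generating function `H(s) = ∑_{j≥1} h_j s^j`. -/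
noncomputable def Hgen (hh : ℕ → ℝ) (s : ℝ) : ℝ :=
  ∑' j : ℕ, hh (j + 1) * s ^ (j + 1)

theorem stmt15 (c : ℕ) (hc : 1 ≤ c) (b : ℕ → ℝ)
    (hbnn : ∀ j : ℕ, j ≠ 1 → 0 ≤ b j) (hb0 : 0 < b 0)
    (hbsum : Summable b) (hbzero : (∑' j : ℕ, b j) = 0)
    (hb2 : 0 < ∑' j : ℕ, b (j + 2))
    (hh : ℕ → ℝ) (hhnn : ∀ j : ℕ, 0 ≤ hh (j + 1))
    (hhsum : Summable (fun j : ℕ => hh (j + 1)))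
    (hhpos : 0 < ∑' j : ℕ, hh (j + 1))
    (β : ℝ) (hβ : 0 < β)
    (π : ℕ → ℝ) (hπnn : ∀ n : ℕ, 0 ≤ π n) (hπsum : Summable π)
    (hπ1 : (∑' n : ℕ, π n) = 1)
    (heq0 : -((∑' j : ℕ, hh (j + 1)) + β) * π 0 + b 0 * π 1 + β = 0)
    (heqmid : ∀ n : ℕ, 1 ≤ n → n ≤ c - 1 →
      hh n * π 0 + (∑ k ∈ Finset.Icc 1 (n - 1), b (n - k + 1) * π k) +
        (b 1 - ((n : ℝ) - 1) * b 0 - β) * π n + ((n : ℝ) + 1) * b 0 * π (n + 1) = 0)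
    (heqtail : ∀ n : ℕ, c ≤ n →
      hh n * π 0 + (∑ k ∈ Finset.Icc 1 (n - 1), b (n - k + 1) * π k) +
        (b 1 - ((c : ℝ) - 1) * b 0 - β) * π n + (c : ℝ) * b 0 * π (n + 1) = 0)
    (uβ : ℝ) (huβ : uβ ∈ Set.Ioo (0 : ℝ) 1) (huβroot : Bi b c uβ = β * uβ) :
    ∀ s ∈ Set.Icc (0 : ℝ) 1,
      (∑' n : ℕ, π n * s ^ n) * (Bi b c s - β * s) =
        π 0 * ((Bi b c s - β * s) + s * (Hgen hh uβ - Hgen hh s)) +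
          (∑ k ∈ Finset.Icc 1 (c - 1),
            π k * ((c : ℝ) - (k : ℝ)) * b 0 *
              (s ^ k * (1 - s) - s * uβ ^ (k - 1) * (1 - uβ))) ∧
      (∑' n : ℕ, π n * s ^ n) * (Bi b c s - β * s) =
        π 0 * (Bi b c s + s * ((∑' j : ℕ, hh (j + 1)) - Hgen hh s)) - β * s +
          ∑ k ∈ Finset.Icc 1 (c - 1),
            π k * s ^ k * ((c : ℝ) - (k : ℝ)) * b 0 * (1 - s) := by
  have key : ∀ s ∈ Set.Icc (0 : ℝ) 1,
      (∑' n : ℕ, π n * s ^ n) * (Bi b c s - β * s) =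
        π 0 * (Bi b c s + s * ((∑' j : ℕ, hh (j + 1)) - Hgen hh s)) - β * s +
          ∑ k ∈ Finset.Icc 1 (c - 1),
            π k * s ^ k * ((c : ℝ) - (k : ℝ)) * b 0 * (1 - s) := by
    rintro s ⟨hs0, hs1⟩
    have hsabs : |s| ≤ 1 := abs_le.mpr ⟨by linarith, hs1⟩
    have hspow : ∀ n : ℕ, s ^ n ≤ 1 := fun n => pow_le_one₀ hs0 hs1
    have hspownn : ∀ n : ℕ, 0 ≤ s ^ n := fun n => pow_nonneg hs0 n
    -- summability facts
    have hπs : Summable (fun n : ℕ => π n * s ^ n) :=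
      Summable.of_nonneg_of_le (fun n => mul_nonneg (hπnn n) (hspownn n))
        (fun n => mul_le_of_le_one_right (hπnn n) (hspow n)) hπsum
    have hπts : Summable (fun n : ℕ => π (n + 1) * s ^ (n + 1)) :=
      (summable_nat_add_iff (f := fun n : ℕ => π n * s ^ n) 1).mpr hπs
    have hbs : Summable (fun j : ℕ => b j * s ^ j) := by
      apply Summable.of_norm_bounded hbsum.abs
      intro j
      rw [Real.norm_eq_abs, abs_mul, abs_pow]
      exact mul_le_of_le_one_right (abs_nonneg _)
        (pow_le_one₀ (abs_nonneg s) hsabs)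
    have hb1s : Summable (fun j : ℕ => b (j + 1) * s ^ (j + 1)) :=
      (summable_nat_add_iff (f := fun j : ℕ => b j * s ^ j) 1).mpr hbs
    have hbts : Summable (fun j : ℕ => b (j + 2) * s ^ (j + 2)) :=
      (summable_nat_add_iff (f := fun j : ℕ => b j * s ^ j) 2).mpr hbs
    have hhs : Summable (fun j : ℕ => hh (j + 1) * s ^ (j + 1)) :=
      Summable.of_nonneg_of_le (fun j => mul_nonneg (hhnn j) (hspownn _))
        (fun j => mul_le_of_le_one_right (hhnn j) (hspow _)) hhsum
    have hMs : Summable (fun n : ℕ =>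
        ((min (n + 1) c : ℕ) : ℝ) * (π (n + 1) * s ^ (n + 1))) := by
      apply Summable.of_nonneg_of_le _ _ (hπts.mul_left (c : ℝ))
      · intro n
        exact mul_nonneg (by positivity) (mul_nonneg (hπnn _) (hspownn _))
      · intro n
        apply mul_le_mul_of_nonneg_right _ (mul_nonneg (hπnn _) (hspownn _))
        exact Nat.cast_le.mpr (min_le_right _ _)
    have hgs : Summable (fun n : ℕ =>
        ((c - min (n + 1) c : ℕ) : ℝ) * (π (n + 1) * s ^ (n + 1))) := by
      apply Summable.of_nonneg_of_le _ _ (hπts.mul_left (c : ℝ))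
      · intro n
        exact mul_nonneg (by positivity) (mul_nonneg (hπnn _) (hspownn _))
      · intro n
        apply mul_le_mul_of_nonneg_right _ (mul_nonneg (hπnn _) (hspownn _))
        exact Nat.cast_le.mpr (Nat.sub_le _ _)
    have hfn : Summable (fun i : ℕ => ‖π (i + 1) * s ^ (i + 1)‖) := by
      simpa only [Real.norm_eq_abs] using hπts.abs
    have hgn : Summable (fun j : ℕ => ‖b (j + 2) * s ^ (j + 2)‖) := by
      simpa only [Real.norm_eq_abs] using hbts.abs
    -- unified balance equation
    have hE : ∀ n : ℕ,
        hh (n + 1) * π 0 + (∑ k ∈ Finset.Icc 1 n, b (n + 1 - k + 1) * π k) +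
          (b 1 - (((min (n + 1) c : ℕ) : ℝ) - 1) * b 0 - β) * π (n + 1) +
          ((min (n + 2) c : ℕ) : ℝ) * b 0 * π (n + 2) = 0 := by
      intro n
      rcases lt_or_ge (n + 1) c with hlt | hge
      · have h1 := heqmid (n + 1) (by omega) (by omega)
        simp only [Nat.add_sub_cancel] at h1
        rw [min_eq_left (by omega : n + 1 ≤ c), min_eq_left (by omega : n + 2 ≤ c)]
        have h2 : n + 1 + 1 = n + 2 := rfl
        rw [h2] at h1
        push_cast at h1 ⊢
        linear_combination h1
      · have h1 := heqtail (n + 1) hge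
        simp only [Nat.add_sub_cancel] at h1
        rw [min_eq_right (by omega : c ≤ n + 1), min_eq_right (by omega : c ≤ n + 2)]
        have h2 : n + 1 + 1 = n + 2 := rfl
        rw [h2] at h1
        linear_combination h1
    -- summabilities of the pieces
    have hA : Summable (fun n : ℕ => π 0 * s * (hh (n + 1) * s ^ (n + 1))) :=
      hhs.mul_left _
    have hC1 : Summable (fun n : ℕ =>
        (b 1 - β + b 0) * s * (π (n + 1) * s ^ (n + 1))) := hπts.mul_left _
    have hC2 : Summable (fun n : ℕ =>
        b 0 * s * (((min (n + 1) c : ℕ) : ℝ) * (π (n + 1) * s ^ (n + 1)))) :=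
      hMs.mul_left _
    have hD : Summable (fun n : ℕ =>
        b 0 * (((min (n + 1) c : ℕ) : ℝ) * (π (n + 1) * s ^ (n + 1)))) :=
      hMs.mul_left _
    have hDs : Summable (fun n : ℕ =>
        b 0 * (((min (n + 2) c : ℕ) : ℝ) * (π (n + 2) * s ^ (n + 2)))) :=
      (summable_nat_add_iff (f := fun n : ℕ =>
        b 0 * (((min (n + 1) c : ℕ) : ℝ) * (π (n + 1) * s ^ (n + 1)))) 1).mpr hD
    -- the convolution piece
    have hBpt : ∀ n : ℕ,
        (∑ k ∈ Finset.Icc 1 (n + 1), b (n + 1 + 1 - k + 1) * π k) * s ^ (n + 1 + 2) =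
        ∑ kl ∈ Finset.HasAntidiagonal.antidiagonal n,
          (π (kl.1 + 1) * s ^ (kl.1 + 1)) * (b (kl.2 + 2) * s ^ (kl.2 + 2)) := by
      intro n
      rw [Finset.Nat.sum_antidiagonal_eq_sum_range_succ_mk,
        show (∑ k ∈ Finset.Icc 1 (n + 1), b (n + 1 + 1 - k + 1) * π k)
          = ∑ k ∈ Finset.range (n + 1), b (n + 1 + 1 - (k + 1) + 1) * π (k + 1)
          from sum_Icc_one_eq (n + 1) _, Finset.sum_mul]
      apply Finset.sum_congr rfl
      intro k hk
      have hk' : k ≤ n := by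
        have := Finset.mem_range.mp hk; omega
      have h1 : n + 1 + 1 - (k + 1) + 1 = n - k + 2 := by omega
      have h2 : s ^ (k + 1) * s ^ (n - k + 2) = s ^ (n + 1 + 2) := by
        rw [← pow_add]; congr 1; omega
      rw [h1]
      linear_combination (-(b (n - k + 2) * π (k + 1))) * h2
    have hBanti : Summable (fun n : ℕ => ∑ kl ∈ Finset.HasAntidiagonal.antidiagonal n,
        (π (kl.1 + 1) * s ^ (kl.1 + 1)) * (b (kl.2 + 2) * s ^ (kl.2 + 2))) :=
      (summable_norm_sum_mul_antidiagonal_of_summable_norm hfn hgn).of_norm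
    have hBsummable : Summable (fun n : ℕ =>
        (∑ k ∈ Finset.Icc 1 n, b (n + 1 - k + 1) * π k) * s ^ (n + 2)) := by
      apply (summable_nat_add_iff (f := fun n : ℕ =>
        (∑ k ∈ Finset.Icc 1 n, b (n + 1 - k + 1) * π k) * s ^ (n + 2)) 1).mp
      apply Summable.congr hBanti
      intro n
      exact (hBpt n).symm
    have hB00 : (∑ k ∈ Finset.Icc 1 0, b (0 + 1 - k + 1) * π k) * s ^ (0 + 2) = 0 := by
      rw [Finset.Icc_eq_empty (by omega)]; simp
    have htB : (∑' n : ℕ, (∑ k ∈ Finset.Icc 1 n, b (n + 1 - k + 1) * π k) * s ^ (n + 2))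
        = (∑' n : ℕ, π (n + 1) * s ^ (n + 1)) * (∑' j : ℕ, b (j + 2) * s ^ (j + 2)) := by
      calc (∑' n : ℕ, (∑ k ∈ Finset.Icc 1 n, b (n + 1 - k + 1) * π k) * s ^ (n + 2))
          = (∑ k ∈ Finset.Icc 1 0, b (0 + 1 - k + 1) * π k) * s ^ (0 + 2)
            + ∑' n : ℕ, (∑ k ∈ Finset.Icc 1 (n + 1), b (n + 1 + 1 - k + 1) * π k)
              * s ^ (n + 1 + 2) := Summable.tsum_eq_zero_add hBsummable
        _ = ∑' n : ℕ, ∑ kl ∈ Finset.HasAntidiagonal.antidiagonal n,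
              (π (kl.1 + 1) * s ^ (kl.1 + 1)) * (b (kl.2 + 2) * s ^ (kl.2 + 2)) := by
            rw [tsum_congr hBpt, hB00, zero_add]
        _ = (∑' n : ℕ, π (n + 1) * s ^ (n + 1)) * (∑' j : ℕ, b (j + 2) * s ^ (j + 2)) :=
            (tsum_mul_tsum_eq_tsum_sum_antidiagonal_of_summable_norm hfn hgn).symm
    -- pointwise vanishing of the combined series
    have hpt : ∀ n : ℕ,
        π 0 * s * (hh (n + 1) * s ^ (n + 1))
        + (∑ k ∈ Finset.Icc 1 n, b (n + 1 - k + 1) * π k) * s ^ (n + 2)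
        + ((b 1 - β + b 0) * s * (π (n + 1) * s ^ (n + 1))
           - b 0 * s * (((min (n + 1) c : ℕ) : ℝ) * (π (n + 1) * s ^ (n + 1))))
        + b 0 * (((min (n + 2) c : ℕ) : ℝ) * (π (n + 2) * s ^ (n + 2))) = 0 := by
      intro n
      linear_combination (s ^ (n + 2)) * hE n
    have hmaster : (∑' n : ℕ,
        (π 0 * s * (hh (n + 1) * s ^ (n + 1))
        + (∑ k ∈ Finset.Icc 1 n, b (n + 1 - k + 1) * π k) * s ^ (n + 2)
        + ((b 1 - β + b 0) * s * (π (n + 1) * s ^ (n + 1))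
           - b 0 * s * (((min (n + 1) c : ℕ) : ℝ) * (π (n + 1) * s ^ (n + 1))))
        + b 0 * (((min (n + 2) c : ℕ) : ℝ) * (π (n + 2) * s ^ (n + 2))))) = 0 := by
      rw [tsum_congr hpt]; exact tsum_zero
    have hsplit : (∑' n : ℕ,
        (π 0 * s * (hh (n + 1) * s ^ (n + 1))
        + (∑ k ∈ Finset.Icc 1 n, b (n + 1 - k + 1) * π k) * s ^ (n + 2)
        + ((b 1 - β + b 0) * s * (π (n + 1) * s ^ (n + 1))
           - b 0 * s * (((min (n + 1) c : ℕ) : ℝ) * (π (n + 1) * s ^ (n + 1))))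
        + b 0 * (((min (n + 2) c : ℕ) : ℝ) * (π (n + 2) * s ^ (n + 2))))) =
        (∑' n : ℕ, π 0 * s * (hh (n + 1) * s ^ (n + 1)))
        + (∑' n : ℕ, (∑ k ∈ Finset.Icc 1 n, b (n + 1 - k + 1) * π k) * s ^ (n + 2))
        + ((∑' n : ℕ, (b 1 - β + b 0) * s * (π (n + 1) * s ^ (n + 1)))
           - ∑' n : ℕ, b 0 * s * (((min (n + 1) c : ℕ) : ℝ) * (π (n + 1) * s ^ (n + 1))))
        + ∑' n : ℕ, b 0 * (((min (n + 2) c : ℕ) : ℝ) * (π (n + 2) * s ^ (n + 2))) := by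
      rw [Summable.tsum_add ((hA.add hBsummable).add (hC1.sub hC2)) hDs,
        Summable.tsum_add (hA.add hBsummable) (hC1.sub hC2),
        Summable.tsum_add hA hBsummable, Summable.tsum_sub hC1 hC2]
    rw [hsplit] at hmaster
    have eA : (∑' n : ℕ, π 0 * s * (hh (n + 1) * s ^ (n + 1)))
        = π 0 * s * ∑' j : ℕ, hh (j + 1) * s ^ (j + 1) := tsum_mul_left
    have eC1 : (∑' n : ℕ, (b 1 - β + b 0) * s * (π (n + 1) * s ^ (n + 1)))
        = (b 1 - β + b 0) * s * ∑' n : ℕ, π (n + 1) * s ^ (n + 1) := tsum_mul_left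
    have eC2 : (∑' n : ℕ, b 0 * s * (((min (n + 1) c : ℕ) : ℝ) * (π (n + 1) * s ^ (n + 1))))
        = b 0 * s * ∑' n : ℕ, ((min (n + 1) c : ℕ) : ℝ) * (π (n + 1) * s ^ (n + 1)) :=
      tsum_mul_left
    have eD0 : (∑' n : ℕ, b 0 * (((min (n + 1) c : ℕ) : ℝ) * (π (n + 1) * s ^ (n + 1))))
        = b 0 * ∑' n : ℕ, ((min (n + 1) c : ℕ) : ℝ) * (π (n + 1) * s ^ (n + 1)) :=
      tsum_mul_left
    have eDs : (∑' n : ℕ, b 0 * (((min (n + 2) c : ℕ) : ℝ) * (π (n + 2) * s ^ (n + 2))))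
        = b 0 * (∑' n : ℕ, ((min (n + 1) c : ℕ) : ℝ) * (π (n + 1) * s ^ (n + 1)))
          - b 0 * (π 1 * s ^ 1) := by
      have h0 : (∑' n : ℕ, b 0 * (((min (n + 1) c : ℕ) : ℝ) * (π (n + 1) * s ^ (n + 1))))
          = b 0 * (((min 1 c : ℕ) : ℝ) * (π 1 * s ^ 1))
            + ∑' n : ℕ, b 0 * (((min (n + 2) c : ℕ) : ℝ) * (π (n + 2) * s ^ (n + 2))) :=
        Summable.tsum_eq_zero_add hD
      rw [min_eq_left hc, Nat.cast_one, eD0] at h0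
      linear_combination -h0
    rw [eA, htB, eC1, eC2, eDs] at hmaster
    -- expressing the min-series by a finite correction
    have hMF : (∑' n : ℕ, ((min (n + 1) c : ℕ) : ℝ) * (π (n + 1) * s ^ (n + 1)))
        = (c : ℝ) * (∑' n : ℕ, π (n + 1) * s ^ (n + 1))
          - ∑ n ∈ Finset.range (c - 1), ((c : ℝ) - ((n : ℝ) + 1)) * (π (n + 1) * s ^ (n + 1)) := by
      have hpt2 : ∀ n : ℕ, ((min (n + 1) c : ℕ) : ℝ) * (π (n + 1) * s ^ (n + 1))
          = (c : ℝ) * (π (n + 1) * s ^ (n + 1))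
            - ((c - min (n + 1) c : ℕ) : ℝ) * (π (n + 1) * s ^ (n + 1)) := by
        intro n
        have hcast : ((c - min (n + 1) c : ℕ) : ℝ)
            = (c : ℝ) - ((min (n + 1) c : ℕ) : ℝ) :=
          Nat.cast_sub (min_le_right _ _)
        rw [hcast]; ring
      have hcmul : Summable (fun n : ℕ => (c : ℝ) * (π (n + 1) * s ^ (n + 1))) :=
        hπts.mul_left _
      have hgF : (∑' n : ℕ, ((c - min (n + 1) c : ℕ) : ℝ) * (π (n + 1) * s ^ (n + 1)))
          = ∑ n ∈ Finset.range (c - 1), ((c : ℝ) - ((n : ℝ) + 1)) * (π (n + 1) * s ^ (n + 1)) := by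
        have hz : ∀ n ∉ Finset.range (c - 1),
            ((c - min (n + 1) c : ℕ) : ℝ) * (π (n + 1) * s ^ (n + 1)) = 0 := by
          intro n hn
          have hcle : c ≤ n + 1 := by
            by_contra hcon
            exact hn (Finset.mem_range.mpr (by omega))
          rw [min_eq_right hcle, Nat.sub_self]
          simp
        rw [tsum_eq_sum hz]
        apply Finset.sum_congr rfl
        intro n hn
        have hlt : n + 1 ≤ c := by
          have := Finset.mem_range.mp hn; omega
        rw [min_eq_left hlt, Nat.cast_sub hlt]
        push_cast
        ring
      rw [tsum_congr hpt2, Summable.tsum_sub hcmul hgs, tsum_mul_left, hgF]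
    rw [hMF] at hmaster
    -- head/tail decompositions
    have hPi : (∑' n : ℕ, π n * s ^ n) = π 0 + ∑' n : ℕ, π (n + 1) * s ^ (n + 1) := by
      have h1 : (∑' n : ℕ, π n * s ^ n)
          = π 0 * s ^ 0 + ∑' n : ℕ, π (n + 1) * s ^ (n + 1) := Summable.tsum_eq_zero_add hπs
      rw [h1, pow_zero, mul_one]
    have hB0 : (∑' j : ℕ, b j * s ^ j)
        = b 0 + b 1 * s + ∑' j : ℕ, b (j + 2) * s ^ (j + 2) := by
      have h1 : (∑' j : ℕ, b j * s ^ j)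
          = b 0 * s ^ 0 + ∑' j : ℕ, b (j + 1) * s ^ (j + 1) := Summable.tsum_eq_zero_add hbs
      have h2 : (∑' j : ℕ, b (j + 1) * s ^ (j + 1))
          = b 1 * s ^ 1 + ∑' j : ℕ, b (j + 2) * s ^ (j + 2) := Summable.tsum_eq_zero_add hb1s
      rw [h1, h2]; ring
    -- the finite sum in the statement
    have hSfin : (∑ k ∈ Finset.Icc 1 (c - 1),
          π k * s ^ k * ((c : ℝ) - (k : ℝ)) * b 0 * (1 - s))
        = b 0 * (1 - s) * ∑ n ∈ Finset.range (c - 1),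
            ((c : ℝ) - ((n : ℝ) + 1)) * (π (n + 1) * s ^ (n + 1)) := by
      rw [show (∑ k ∈ Finset.Icc 1 (c - 1), π k * s ^ k * ((c : ℝ) - (k : ℝ)) * b 0 * (1 - s))
          = ∑ n ∈ Finset.range (c - 1),
              π (n + 1) * s ^ (n + 1) * ((c : ℝ) - ((n + 1 : ℕ) : ℝ)) * b 0 * (1 - s)
          from sum_Icc_one_eq (c - 1) _, Finset.mul_sum]
      apply Finset.sum_congr rfl
      intro n hn
      push_cast
      ring
    simp only [Bi, Hgen]
    rw [hPi, hB0, hSfin]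
    linear_combination hmaster + s * heq0
  intro s hs
  have k1 := key s hs
  refine ⟨?_, k1⟩
  have k2 := key uβ ⟨le_of_lt huβ.1, le_of_lt huβ.2⟩
  rw [huβroot] at k2
  have hu0 : uβ ≠ 0 := ne_of_gt huβ.1
  have hsum_u : (∑ k ∈ Finset.Icc 1 (c - 1),
        π k * uβ ^ k * ((c : ℝ) - (k : ℝ)) * b 0 * (1 - uβ))
      = uβ * ∑ k ∈ Finset.Icc 1 (c - 1),
          π k * ((c : ℝ) - (k : ℝ)) * b 0 * (uβ ^ (k - 1) * (1 - uβ)) := by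
    rw [Finset.mul_sum]
    apply Finset.sum_congr rfl
    intro k hk
    have hk1 : 1 ≤ k := (Finset.mem_Icc.mp hk).1
    have hpow : uβ ^ k = uβ * uβ ^ (k - 1) := by
      conv_lhs => rw [show k = 1 + (k - 1) by omega]
      rw [pow_add, pow_one]
    rw [hpow]; ring
  rw [hsum_u] at k2
  have h3 : uβ * (π 0 * (β + ((∑' j : ℕ, hh (j + 1)) - Hgen hh uβ)) - β
      + ∑ k ∈ Finset.Icc 1 (c - 1),
          π k * ((c : ℝ) - (k : ℝ)) * b 0 * (uβ ^ (k - 1) * (1 - uβ))) = 0 := by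
    linear_combination -k2
  have hrel : π 0 * (β + ((∑' j : ℕ, hh (j + 1)) - Hgen hh uβ)) - β
      + ∑ k ∈ Finset.Icc 1 (c - 1),
          π k * ((c : ℝ) - (k : ℝ)) * b 0 * (uβ ^ (k - 1) * (1 - uβ)) = 0 :=
    (mul_eq_zero.mp h3).resolve_left hu0
  have hsplit2 : (∑ k ∈ Finset.Icc 1 (c - 1),
        π k * ((c : ℝ) - (k : ℝ)) * b 0 * (s ^ k * (1 - s) - s * uβ ^ (k - 1) * (1 - uβ)))
      = (∑ k ∈ Finset.Icc 1 (c - 1), π k * s ^ k * ((c : ℝ) - (k : ℝ)) * b 0 * (1 - s))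
        - s * ∑ k ∈ Finset.Icc 1 (c - 1),
            π k * ((c : ℝ) - (k : ℝ)) * b 0 * (uβ ^ (k - 1) * (1 - uβ)) := by
    rw [Finset.mul_sum, ← Finset.sum_sub_distrib]
    apply Finset.sum_congr rfl
    intro k _
    ring
  rw [hsplit2]
  linear_combination k1 + s * hrel
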